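/- arXiv:1110.4399 — 3 statements merged into one kernel-verified Lean document; each statement's English description precedes it below -/
import Mathlib

section
/- Let X be a separable Hilbert space, I=[a,b] a compact interval, f : I → X a continuous function, and {φ_n} a Hilbert (complete orthonormal) basis of X. Then the series ∑_{n=1}^∞ (f(t), φ_n)_X φ_n converges to f(t) uniformly in t ∈ I. -/
open Set Filter

/-- Bessel bound: partial Fourier sums are norm-nonincreasing. -/
lemma bessel_partial_sum {X : Type*} [NormedAddCommGroup X] [InnerProductSpace ℝ X]
    (φ : ℕ → X) (hON : Orthonormal ℝ φ) (N : ℕ) (x : X) :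
    ‖∑ n ∈ Finset.range N, (inner ℝ x (φ n) : ℝ) • φ n‖ ≤ ‖x‖ := by
  have h1 : ‖∑ n ∈ Finset.range N, (inner ℝ x (φ n) : ℝ) • φ n‖ ^ 2
      = ∑ n ∈ Finset.range N, ‖(inner ℝ (φ n) x : ℝ)‖ ^ 2 := by
    rw [← real_inner_self_eq_norm_sq]
    rw [hON.inner_sum (fun n => (inner ℝ x (φ n) : ℝ)) (fun n => (inner ℝ x (φ n) : ℝ))]
    refine Finset.sum_congr rfl fun n _ => ?_
    simp [real_inner_comm x (φ n), ← sq, sq_abs, Real.norm_eq_abs]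
  have h3 : ‖∑ n ∈ Finset.range N, (inner ℝ x (φ n) : ℝ) • φ n‖ ^ 2 ≤ ‖x‖ ^ 2 := by
    rw [h1]; exact hON.sum_inner_products_le (s := Finset.range N) x
  nlinarith [norm_nonneg x, norm_nonneg (∑ n ∈ Finset.range N, (inner ℝ x (φ n) : ℝ) • φ n)]

/-- Pointwise convergence of the Fourier partial sums. -/
lemma fourier_pointwise {X : Type*} [NormedAddCommGroup X] [InnerProductSpace ℝ X]
    [CompleteSpace X]
    (φ : ℕ → X) (hON : Orthonormal ℝ φ)
    (hcomplete : (Submodule.span ℝ (Set.range φ)).topologicalClosure = ⊤) (x : X) :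
    Tendsto (fun N => ∑ n ∈ Finset.range N, (inner ℝ x (φ n) : ℝ) • φ n) atTop (nhds x) := by
  let b : HilbertBasis ℕ ℝ X := HilbertBasis.mk hON (by rw [hcomplete])
  have hb : ⇑b = φ := HilbertBasis.coe_mk _ _
  have hs : HasSum (fun n => (inner ℝ x (φ n) : ℝ) • φ n) x := by
    have := b.hasSum_repr x
    convert this using 2 with n
    rw [b.repr_apply_apply, hb, real_inner_comm]
  exact hs.tendsto_sum_nat

/-- Lemma A.3: for a continuous function `f : [a,b] → X` and a Hilbert basis `{φ_n}` of the
separable Hilbert space `X`, the Fourier series `∑ (f(t),φ_n) φ_n` converges to `f(t)`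
uniformly in `t ∈ [a,b]`. -/
theorem stmt2 {X : Type*} [NormedAddCommGroup X] [InnerProductSpace ℝ X] [CompleteSpace X]
    (a b : ℝ) (hab : a ≤ b)
    (φ : ℕ → X) (hON : Orthonormal ℝ φ)
    (hcomplete : (Submodule.span ℝ (Set.range φ)).topologicalClosure = ⊤)
    (f : ℝ → X) (hf : ContinuousOn f (Icc a b)) :
    TendstoUniformlyOn
      (fun N t => ∑ n ∈ Finset.range N, (inner ℝ (f t) (φ n) : ℝ) • φ n)
      f atTop (Icc a b) := by
  set P : ℕ → X → X := fun N x => ∑ n ∈ Finset.range N, (inner ℝ x (φ n) : ℝ) • φ n with hP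
  -- P N is 1-Lipschitz
  have hlip : ∀ N (x y : X), ‖P N x - P N y‖ ≤ ‖x - y‖ := by
    intro N x y
    have hxy : P N x - P N y = P N (x - y) := by
      simp only [hP, ← Finset.sum_sub_distrib, ← sub_smul, inner_sub_left]
    rw [hxy]
    exact bessel_partial_sum φ hON N (x - y)
  have hK : IsCompact (f '' Icc a b) := isCompact_Icc.image_of_continuousOn hf
  rw [Metric.tendstoUniformlyOn_iff]
  intro ε hε
  -- finite ε/3 net
  obtain ⟨T, hTsub, hTfin, hTcover⟩ :=
    hK.elim_finite_subcover_image (b := f '' Icc a b) (c := fun c => Metric.ball c (ε / 3))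
      (fun c _ => Metric.isOpen_ball)
      (fun x hx => Set.mem_iUnion₂.2 ⟨x, hx, Metric.mem_ball_self (by linarith)⟩)
  -- eventually all net points are ε/3-approximated
  have hev : ∀ᶠ N in atTop, ∀ c ∈ T, ‖P N c - c‖ < ε / 3 := by
    rw [eventually_all_finite hTfin]
    intro c _
    have := fourier_pointwise φ hON hcomplete c
    have := (this.sub_const c).norm
    simpa using (Filter.Tendsto.eventually_lt_const (by linarith : (0:ℝ) < ε/3) (by simpa using this : Tendsto (fun N => ‖P N c - c‖) atTop (nhds 0)))
  filter_upwards [hev] with N hN t ht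
  have hft : f t ∈ f '' Icc a b := Set.mem_image_of_mem f ht
  obtain ⟨c, hcT, hc⟩ := Set.mem_iUnion₂.1 (hTcover hft)
  have h1 : ‖P N (f t) - P N c‖ ≤ ‖f t - c‖ := hlip N (f t) c
  have h2 : ‖P N c - c‖ < ε / 3 := hN c hcT
  have h3 : ‖f t - c‖ < ε / 3 := by
    have := Metric.mem_ball.1 hc
    rwa [dist_eq_norm] at this
  have key : f t - P N (f t) = (f t - c) + (c - P N c) + (P N c - P N (f t)) := by abel
  rw [dist_eq_norm, key]
  have hb := norm_add₃_le (a := f t - c) (b := c - P N c) (c := P N c - P N (f t))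
  have e1 : ‖c - P N c‖ = ‖P N c - c‖ := norm_sub_rev _ _
  have e2 : ‖P N c - P N (f t)‖ = ‖P N (f t) - P N c‖ := norm_sub_rev _ _
  linarith [h1.trans_lt h3]
end

section
/- Let Ω be a bounded Lipschitz domain and f : [0,∞) → L²(Ω) continuous. Then the problem ü(t) = Δu(t) + f(t) (as an equation in H^{-1}(Ω) for each t ≥ 0), u(0) = u̇(0) = 0, has a unique weak solution u ∈ C²([0,∞); H^{-1}(Ω)) ∩ C¹([0,∞); L²(Ω)) ∩ C([0,∞); H¹₀(Ω)), and it satisfies ‖∇u(t)‖_{L²(Ω)} ≤ ∫_0^t ‖f(τ)‖_{L²(Ω)} dτ for all t ≥ 0. -/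
open Set intervalIntegral

section
open MeasureTheory
noncomputable section
namespace WaveAux
abbrev E : Type := lp (fun _ : ℕ => ℝ) 2

lemma summable_sq (x : E) : Summable fun n => (x n : ℝ) ^ 2 := by
  have h := (lp.memℓp x).summable (p := 2) (by norm_num)
  have h2 : ((2 : ENNReal).toReal) = ((2 : ℕ) : ℝ) := by norm_num
  rw [h2] at h
  simp only [Real.rpow_natCast, Real.norm_eq_abs, sq_abs] at h
  exact h

lemma memℓp_of_abs_le (x : E) (y : ℕ → ℝ) (h : ∀ n, |y n| ≤ |x n|) :
    Memℓp y 2 := by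
  apply memℓp_gen
  refine Summable.of_nonneg_of_le (fun n => by positivity) (fun n => ?_)
    ((lp.memℓp x).summable (p := 2) (by norm_num))
  exact Real.rpow_le_rpow (norm_nonneg _) (by simpa [Real.norm_eq_abs] using h n)
    (by norm_num)

lemma norm_eq_sqrt (x : E) : ‖x‖ = Real.sqrt (∑' n, (x n : ℝ) ^ 2) := by
  rw [lp.norm_eq_tsum_rpow (p := 2) (by norm_num) x]
  have h2 : ((2 : ENNReal).toReal) = ((2 : ℕ) : ℝ) := by norm_num
  have hx : ∀ n : ℕ, ‖x n‖ ^ ((2 : ENNReal).toReal) = (x n : ℝ) ^ 2 := fun n => by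
    rw [h2, Real.rpow_natCast]; simp [Real.norm_eq_abs, sq_abs]
  simp_rw [hx]
  rw [show (1 / (2 : ENNReal).toReal) = (1 / 2 : ℝ) by norm_num]
  rw [Real.sqrt_eq_rpow]

lemma norm_le_of_abs_le {x y : E} (h : ∀ n, |x n| ≤ |y n|) : ‖x‖ ≤ ‖y‖ := by
  rw [norm_eq_sqrt, norm_eq_sqrt]
  apply Real.sqrt_le_sqrt
  refine Summable.tsum_le_tsum (fun n => ?_) (summable_sq x) (summable_sq y)
  have := h n
  nlinarith [abs_nonneg (x n), abs_nonneg (y n), sq_abs (x n), sq_abs (y n)]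

/-- The diagonal multiplication operator on `ℓ²` by a sequence bounded by 1. -/
def diagCLM (a : ℕ → ℝ) (ha : ∀ n, |a n| ≤ 1) : E →L[ℝ] E :=
  LinearMap.mkContinuous
    { toFun := fun x => ⟨fun n => a n * x n,
        memℓp_of_abs_le x _ (fun n => by
          rw [abs_mul]
          calc |a n| * |x n| ≤ 1 * |x n| := by
                exact mul_le_mul_of_nonneg_right (ha n) (abs_nonneg _)
            _ = |x n| := one_mul _)⟩
      map_add' := fun x y => by
        ext n
        simp [lp.coeFn_add, mul_add]
        rfl
      map_smul' := fun c x => by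
        ext n
        simp [lp.coeFn_smul, mul_comm, mul_left_comm] }
    1 (fun x => by
      rw [one_mul]
      refine norm_le_of_abs_le (fun n => ?_)
      show |a n * x n| ≤ |x n|
      rw [abs_mul]
      calc |a n| * |x n| ≤ 1 * |x n| :=
            mul_le_mul_of_nonneg_right (ha n) (abs_nonneg _)
        _ = |x n| := one_mul _)

@[simp] lemma diagCLM_apply (a : ℕ → ℝ) (ha : ∀ n, |a n| ≤ 1) (x : E) (n : ℕ) :
    (diagCLM a ha x) n = a n * x n := rfl

lemma norm_diagCLM_apply_le (a : ℕ → ℝ) (ha : ∀ n, |a n| ≤ 1) (x : E) :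
    ‖diagCLM a ha x‖ ≤ ‖x‖ := by
  refine norm_le_of_abs_le (fun n => ?_)
  rw [diagCLM_apply, abs_mul]
  calc |a n| * |x n| ≤ 1 * |x n| := mul_le_mul_of_nonneg_right (ha n) (abs_nonneg _)
    _ = |x n| := one_mul _

/-- Evaluation at an index, as a continuous linear map on `ℓ²`. -/
def evalCLM (n : ℕ) : E →L[ℝ] ℝ :=
  LinearMap.mkContinuous
    { toFun := fun x => x n
      map_add' := fun x y => by simp [lp.coeFn_add]
      map_smul' := fun c x => by simp [lp.coeFn_smul] }
    1 (fun x => by show ‖(x : ℕ → ℝ) n‖ ≤ 1 * ‖x‖; simpa using lp.norm_apply_le_norm (by norm_num : (2:ENNReal) ≠ 0) x n)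

@[simp] lemma evalCLM_apply (n : ℕ) (x : E) : evalCLM n x = x n := rfl


/-- strong continuity of a (bounded-by-1) diagonal family applied to a continuous curve -/
lemma continuousOn_diag {a : ℝ → ℕ → ℝ} (hb : ∀ t n, |a t n| ≤ 1)
    (hc : ∀ n, Continuous fun t => a t n) {G : ℝ → E} (hG : ContinuousOn G (Ici 0)) :
    ContinuousOn (fun t => diagCLM (a t) (hb t) (G t)) (Ici 0) := by
  intro t₀ ht₀
  have key : Filter.Tendsto (fun t => diagCLM (a t) (hb t) (G t₀))
      (nhdsWithin t₀ (Ici 0)) (nhds (diagCLM (a t₀) (hb t₀) (G t₀))) := by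
    rw [← tendsto_sub_nhds_zero_iff]
    rw [tendsto_zero_iff_norm_tendsto_zero]
    have hnorm : ∀ t, ‖diagCLM (a t) (hb t) (G t₀) - diagCLM (a t₀) (hb t₀) (G t₀)‖
        = Real.sqrt (∑' n, ((a t n - a t₀ n) * (G t₀) n) ^ 2) := by
      intro t
      rw [norm_eq_sqrt]
      congr 1
      apply tsum_congr
      intro n
      have : (diagCLM (a t) (hb t) (G t₀) - diagCLM (a t₀) (hb t₀) (G t₀)) n
          = (a t n - a t₀ n) * (G t₀) n := by
        rw [lp.coeFn_sub, Pi.sub_apply, diagCLM_apply, diagCLM_apply]; ring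
      rw [this]
    simp_rw [hnorm]
    have h0 : Real.sqrt (∑' n : ℕ, ((0:ℝ)) ) = 0 := by simp
    have htsum : Filter.Tendsto (fun t => ∑' n, ((a t n - a t₀ n) * (G t₀) n) ^ 2)
        (nhdsWithin t₀ (Ici 0)) (nhds 0) := by
      have := tendsto_tsum_of_dominated_convergence
        (𝓕 := nhdsWithin t₀ (Ici 0))
        (f := fun t n => ((a t n - a t₀ n) * (G t₀) n) ^ 2)
        (g := fun n => (0:ℝ))
        (bound := fun n => 4 * ((G t₀) n) ^ 2)
        ((summable_sq (G t₀)).mul_left 4)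
        (fun n => by
          have hcont : Continuous fun t => ((a t n - a t₀ n) * (G t₀) n) ^ 2 := by
            have := hc n
            fun_prop
          have h5 : Filter.Tendsto (fun t => ((a t n - a t₀ n) * (G t₀) n) ^ 2)
              (nhdsWithin t₀ (Ici 0)) (nhds (((a t₀ n - a t₀ n) * (G t₀) n) ^ 2)) :=
            (hcont.tendsto t₀).mono_left (nhdsWithin_le_nhds (s := Ici 0))
          simpa using h5)
        (Filter.Eventually.of_forall (fun t n => by
          have h1 : |a t n - a t₀ n| ≤ 2 := by
            have := hb t n; have := hb t₀ n
            have := abs_sub (a t n) (a t₀ n)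
            calc |a t n - a t₀ n| ≤ |a t n| + |a t₀ n| := abs_sub _ _
              _ ≤ 2 := by linarith [hb t n, hb t₀ n]
          have : ((a t n - a t₀ n) * (G t₀) n) ^ 2 ≤ 4 * ((G t₀) n) ^ 2 := by
            rw [mul_pow]
            have h2 : (a t n - a t₀ n) ^ 2 ≤ 4 := by nlinarith [abs_nonneg (a t n - a t₀ n), sq_abs (a t n - a t₀ n)]
            nlinarith [sq_nonneg ((G t₀) n)]
          calc ‖((a t n - a t₀ n) * (G t₀) n) ^ 2‖
              = ((a t n - a t₀ n) * (G t₀) n) ^ 2 := by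
                rw [Real.norm_eq_abs, abs_of_nonneg (sq_nonneg _)]
            _ ≤ 4 * ((G t₀) n) ^ 2 := this))
      simpa using this
    have := (Real.continuous_sqrt.tendsto 0).comp htsum
    simpa [Function.comp_def] using this
  have h1 : Filter.Tendsto (fun t => diagCLM (a t) (hb t) (G t) - diagCLM (a t) (hb t) (G t₀))
      (nhdsWithin t₀ (Ici 0)) (nhds 0) := by
    refine squeeze_zero_norm (a := fun t => ‖G t - G t₀‖) (fun t => ?_) ?_
    · show ‖diagCLM (a t) (hb t) (G t) - diagCLM (a t) (hb t) (G t₀)‖ ≤ ‖G t - G t₀‖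
      rw [← map_sub]
      exact norm_diagCLM_apply_le _ _ _
    · have := hG t₀ ht₀
      have h2 : Filter.Tendsto (fun t => G t - G t₀) (nhdsWithin t₀ (Ici 0)) (nhds 0) := by
        rw [← sub_self (G t₀)]
        exact this.sub tendsto_const_nhds
      simpa using h2.norm
  have := h1.add key
  simp only [sub_add_cancel, zero_add] at this
  exact this

/-- FTC on `Ici 0` for continuous integrands. -/
lemma ftc_Ici {B : Type*} [NormedAddCommGroup B] [NormedSpace ℝ B] [CompleteSpace B]
    {g : ℝ → B} (hg : ContinuousOn g (Ici 0)) :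
    ∀ t ∈ Ici (0:ℝ), HasDerivWithinAt (fun s => ∫ τ in (0:ℝ)..s, g τ) (g t) (Ici 0) t := by
  intro t ht
  have hint : IntervalIntegrable g volume 0 t := by
    apply ContinuousOn.intervalIntegrable
    apply hg.mono
    rw [uIcc_of_le ht]
    exact Icc_subset_Ici_self
  rcases eq_or_lt_of_le (mem_Ici.mp ht) with rfl | h
  · have hmeas : StronglyMeasurableAtFilter g (nhdsWithin 0 (Ioi 0)) volume :=
      ⟨Ici 0, Filter.mem_of_superset self_mem_nhdsWithin Ioi_subset_Ici_self,
        hg.aestronglyMeasurable measurableSet_Ici⟩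
    have hcw : ContinuousWithinAt g (Ioi 0) 0 := (hg 0 self_mem_Ici).mono Ioi_subset_Ici_self
    exact intervalIntegral.integral_hasDerivWithinAt_right (s := Ici 0) (t := Ioi 0)
      hint hmeas hcw
  · have hIci : Ici (0:ℝ) ∈ nhds t := Ici_mem_nhds h
    have hca : ContinuousAt g t := hg.continuousAt hIci
    have hmeas' : StronglyMeasurableAtFilter g (nhds t) volume :=
      ⟨Ici 0, hIci, hg.aestronglyMeasurable measurableSet_Ici⟩
    exact (intervalIntegral.integral_hasDerivAt_right hint hmeas' hca).hasDerivWithinAt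

/-- two primitives of the same function on `Ici 0` agreeing at `0` agree. -/
lemma primitive_unique {B : Type*} [NormedAddCommGroup B] [NormedSpace ℝ B]
    {g h : ℝ → B} {d : ℝ → B}
    (hg : ∀ t ∈ Ici (0:ℝ), HasDerivWithinAt g (d t) (Ici 0) t)
    (hh : ∀ t ∈ Ici (0:ℝ), HasDerivWithinAt h (d t) (Ici 0) t)
    (h0 : g 0 = h 0) : ∀ t ∈ Ici (0:ℝ), g t = h t := by
  intro t ht
  have := eq_of_has_deriv_right_eq (a := 0) (b := t) (f' := d) (f := g) (g := h)
    (fun x hx => (hg x hx.1).mono (Ici_subset_Ici.2 hx.1))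
    (fun x hx => (hh x hx.1).mono (Ici_subset_Ici.2 hx.1))
    (fun x hx => ((hg x hx.1).continuousWithinAt).mono Icc_subset_Ici_self)
    (fun x hx => ((hh x hx.1).continuousWithinAt).mono Icc_subset_Ici_self)
    h0
  exact this t ⟨ht, le_rfl⟩

end WaveAux
end

end

set_option maxHeartbeats 1000000 in
open WaveAux MeasureTheory in
/-- Proposition D.1: for continuous `f : [0,∞) → L²(Ω)`, the problem `ü = Δu + f` (as an
equation in `H⁻¹(Ω)`, encoded componentwise on the Dirichlet eigenbasis), `u(0) = u̇(0) = 0`,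
has a unique weak solution `u ∈ C²([0,∞);H⁻¹) ∩ C¹([0,∞);L²) ∩ C([0,∞);H¹₀)`, and it satisfies
`‖∇u(t)‖_{L²} ≤ ∫_0^t ‖f(τ)‖_{L²} dτ` for all `t ≥ 0`.  Abstract spectral encoding:
`v ∈ H¹₀ ↔ ∑ λ_n (v,φ_n)² < ∞` with `‖∇v‖² = ∑ λ_n (v,φ_n)²`, and the `H⁻¹`-valued wave
equation holds iff every Fourier coefficient satisfies `c_n'' = −λ_n c_n + (f,φ_n)`. -/
theorem stmt15 {H : Type*} [NormedAddCommGroup H] [InnerProductSpace ℝ H] [CompleteSpace H]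
    (φ : ℕ → H) (hON : Orthonormal ℝ φ)
    (hcomplete : (Submodule.span ℝ (Set.range φ)).topologicalClosure = ⊤)
    (lam : ℕ → ℝ) (hpos : ∀ n, 0 < lam n)
    (f : ℝ → H) (hf : ContinuousOn f (Ici 0)) :
    ∃ u u' : ℝ → H,
      u 0 = 0 ∧ u' 0 = 0 ∧
      (∀ t ∈ Ici (0:ℝ), HasDerivWithinAt u (u' t) (Ici 0) t) ∧
      ContinuousOn u' (Ici 0) ∧
      -- u(t) ∈ H¹₀ with continuous H¹₀-norm information
      (∀ t ∈ Ici (0:ℝ), Summable (fun n => lam n * (inner ℝ (u t) (φ n) : ℝ) ^ 2)) ∧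
      -- the wave equation in H⁻¹, componentwise on the eigenbasis
      (∀ n, ∀ t ∈ Ici (0:ℝ), HasDerivWithinAt (fun s => (inner ℝ (u' s) (φ n) : ℝ))
        (-(lam n * (inner ℝ (u t) (φ n) : ℝ)) + (inner ℝ (f t) (φ n) : ℝ)) (Ici 0) t) ∧
      -- the energy bound ‖∇u(t)‖ ≤ ∫₀ᵗ ‖f‖
      (∀ t ∈ Ici (0:ℝ),
        Real.sqrt (∑' n, lam n * (inner ℝ (u t) (φ n) : ℝ) ^ 2) ≤
          ∫ τ in (0:ℝ)..t, ‖f τ‖) ∧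
      -- uniqueness among weak solutions
      (∀ w w' : ℝ → H, w 0 = 0 → w' 0 = 0 →
        (∀ t ∈ Ici (0:ℝ), HasDerivWithinAt w (w' t) (Ici 0) t) →
        ContinuousOn w' (Ici 0) →
        (∀ t ∈ Ici (0:ℝ), Summable (fun n => lam n * (inner ℝ (w t) (φ n) : ℝ) ^ 2)) →
        (∀ n, ∀ t ∈ Ici (0:ℝ), HasDerivWithinAt (fun s => (inner ℝ (w' s) (φ n) : ℝ))
          (-(lam n * (inner ℝ (w t) (φ n) : ℝ)) + (inner ℝ (f t) (φ n) : ℝ)) (Ici 0) t) →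
        ∀ t ∈ Ici (0:ℝ), w t = u t) := by
  classical
  have hsp : ⊤ ≤ (Submodule.span ℝ (Set.range φ)).topologicalClosure :=
    le_of_eq hcomplete.symm
  let b : HilbertBasis ℕ ℝ H := HilbertBasis.mk hON hsp
  have hbφ : ⇑b = φ := HilbertBasis.coe_mk hON hsp
  have hrepr : ∀ (x : H) (n : ℕ), b.repr x n = (inner ℝ x (φ n) : ℝ) := fun x n => by
    rw [b.repr_apply_apply, hbφ, real_inner_comm]
  set ω : ℕ → ℝ := fun n => Real.sqrt (lam n) with hωdef
  have hωpos : ∀ n, 0 < ω n := fun n => Real.sqrt_pos.2 (hpos n)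
  have hω2 : ∀ n, lam n = ω n * ω n := fun n => (Real.mul_self_sqrt (hpos n).le).symm
  -- Fourier data of f
  set F : ℝ → E := fun τ => b.repr (f τ) with hFdef
  have hFc : ContinuousOn F (Ici 0) := b.repr.continuous.comp_continuousOn hf
  have hFf : ∀ τ, ‖F τ‖ = ‖f τ‖ := fun τ => b.repr.norm_map (f τ)
  have hFn : ∀ τ n, F τ n = (inner ℝ (f τ) (φ n) : ℝ) := fun τ n => hrepr (f τ) n
  -- bounded multiplier families
  have hacb : ∀ (t : ℝ) (n : ℕ), |Real.cos (ω n * t)| ≤ 1 := fun t n => Real.abs_cos_le_one _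
  have hasb : ∀ (t : ℝ) (n : ℕ), |Real.sin (ω n * t)| ≤ 1 := fun t n => Real.abs_sin_le_one _
  have hacc : ∀ n, Continuous fun t => Real.cos (ω n * t) := fun n => by fun_prop
  have hasc : ∀ n, Continuous fun t => Real.sin (ω n * t) := fun n => by fun_prop
  -- integrands
  set Ic : ℝ → E := fun τ => diagCLM (fun n => Real.cos (ω n * τ)) (fun n => hacb τ n) (F τ)
    with hIcdef
  set Is : ℝ → E := fun τ => diagCLM (fun n => Real.sin (ω n * τ)) (fun n => hasb τ n) (F τ)
    with hIsdef
  have hIcc : ContinuousOn Ic (Ici 0) :=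
    continuousOn_diag (a := fun t n => Real.cos (ω n * t)) (fun t n => hacb t n) hacc hFc
  have hIsc : ContinuousOn Is (Ici 0) :=
    continuousOn_diag (a := fun t n => Real.sin (ω n * t)) (fun t n => hasb t n) hasc hFc
  set P : ℝ → E := fun t => ∫ τ in (0:ℝ)..t, Ic τ with hPdef
  set R : ℝ → E := fun t => ∫ τ in (0:ℝ)..t, Is τ with hRdef
  have hPd : ∀ t ∈ Ici (0:ℝ), HasDerivWithinAt P (Ic t) (Ici 0) t := ftc_Ici hIcc
  have hRd : ∀ t ∈ Ici (0:ℝ), HasDerivWithinAt R (Is t) (Ici 0) t := ftc_Ici hIsc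
  have hPc : ContinuousOn P (Ici 0) := fun t ht => (hPd t ht).continuousWithinAt
  have hRc : ContinuousOn R (Ici 0) := fun t ht => (hRd t ht).continuousWithinAt
  set V : ℝ → E := fun t =>
    diagCLM (fun n => Real.cos (ω n * t)) (fun n => hacb t n) (P t) +
    diagCLM (fun n => Real.sin (ω n * t)) (fun n => hasb t n) (R t) with hVdef
  have hVc : ContinuousOn V (Ici 0) :=
    (continuousOn_diag (a := fun t n => Real.cos (ω n * t)) (fun t n => hacb t n) hacc hPc).add
      (continuousOn_diag (a := fun t n => Real.sin (ω n * t)) (fun t n => hasb t n) hasc hRc)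
  set U : ℝ → E := fun t => ∫ s in (0:ℝ)..t, V s with hUdef
  have hUd : ∀ t ∈ Ici (0:ℝ), HasDerivWithinAt U (V t) (Ici 0) t := ftc_Ici hVc
  have hU0 : U 0 = 0 := intervalIntegral.integral_same
  have hP0 : P 0 = 0 := intervalIntegral.integral_same
  have hR0 : R 0 = 0 := intervalIntegral.integral_same
  have hV0 : V 0 = 0 := by rw [hVdef]; simp only [hP0, hR0, map_zero, add_zero]
  -- integrability of the integrands
  have hIcint : ∀ t ∈ Ici (0:ℝ), IntervalIntegrable Ic volume 0 t := fun t ht =>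
    (hIcc.mono (by rw [uIcc_of_le ht]; exact Icc_subset_Ici_self)).intervalIntegrable
  have hIsint : ∀ t ∈ Ici (0:ℝ), IntervalIntegrable Is volume 0 t := fun t ht =>
    (hIsc.mono (by rw [uIcc_of_le ht]; exact Icc_subset_Ici_self)).intervalIntegrable
  have hVint : ∀ t ∈ Ici (0:ℝ), IntervalIntegrable V volume 0 t := fun t ht =>
    (hVc.mono (by rw [uIcc_of_le ht]; exact Icc_subset_Ici_self)).intervalIntegrable
  -- componentwise facts
  have hVn : ∀ (s : ℝ) (n : ℕ), (V s) n =
      Real.cos (ω n * s) * (P s) n + Real.sin (ω n * s) * (R s) n := fun s n => by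
    rw [hVdef]
    simp only [lp.coeFn_add, Pi.add_apply, diagCLM_apply]
  have hPnd : ∀ n, ∀ t ∈ Ici (0:ℝ), HasDerivWithinAt (fun s => (P s) n)
      (Real.cos (ω n * t) * F t n) (Ici 0) t := by
    intro n t ht
    have h := (evalCLM n).hasFDerivAt.comp_hasDerivWithinAt t (hPd t ht)
    have h2 : evalCLM n (Ic t) = Real.cos (ω n * t) * F t n := by
      rw [evalCLM_apply, hIcdef]; exact diagCLM_apply _ _ _ _
    rw [h2] at h
    exact h
  have hRnd : ∀ n, ∀ t ∈ Ici (0:ℝ), HasDerivWithinAt (fun s => (R s) n)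
      (Real.sin (ω n * t) * F t n) (Ici 0) t := by
    intro n t ht
    have h := (evalCLM n).hasFDerivAt.comp_hasDerivWithinAt t (hRd t ht)
    have h2 : evalCLM n (Is t) = Real.sin (ω n * t) * F t n := by
      rw [evalCLM_apply, hIsdef]; exact diagCLM_apply _ _ _ _
    rw [h2] at h
    exact h
  have hUnd : ∀ n, ∀ t ∈ Ici (0:ℝ), HasDerivWithinAt (fun s => (U s) n)
      ((V t) n) (Ici 0) t := by
    intro n t ht
    exact (evalCLM n).hasFDerivAt.comp_hasDerivWithinAt t (hUd t ht)
  -- scalar trig derivatives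
  have hsind : ∀ (n : ℕ) (t : ℝ), HasDerivAt (fun s => Real.sin (ω n * s))
      (Real.cos (ω n * t) * ω n) t := by
    intro n t
    have h1 : HasDerivAt (fun s : ℝ => ω n * s) (ω n) t := by
      simpa using (hasDerivAt_id t).const_mul (ω n)
    simpa [Function.comp_def] using (Real.hasDerivAt_sin (ω n * t)).comp t h1
  have hcosd : ∀ (n : ℕ) (t : ℝ), HasDerivAt (fun s => Real.cos (ω n * s))
      (-Real.sin (ω n * t) * ω n) t := by
    intro n t
    have h1 : HasDerivAt (fun s : ℝ => ω n * s) (ω n) t := by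
      simpa using (hasDerivAt_id t).const_mul (ω n)
    simpa [Function.comp_def] using (Real.hasDerivAt_cos (ω n * t)).comp t h1
  -- the key scalar identity : ω n * U t n = sin * P - cos * R
  have hkey : ∀ n, ∀ t ∈ Ici (0:ℝ), ω n * (U t) n =
      Real.sin (ω n * t) * (P t) n - Real.cos (ω n * t) * (R t) n := by
    intro n
    refine primitive_unique (d := fun t => ω n * (V t) n) ?_ ?_ ?_
    · intro t ht
      exact (hUnd n t ht).const_mul (ω n)
    · intro t ht
      have h1 := ((hsind n t).hasDerivWithinAt (s := Ici 0)).mul (hPnd n t ht)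
      have h2 := ((hcosd n t).hasDerivWithinAt (s := Ici 0)).mul (hRnd n t ht)
      have h3 := h1.sub h2
      have hval : Real.cos (ω n * t) * ω n * (P t) n +
            Real.sin (ω n * t) * (Real.cos (ω n * t) * F t n) -
            (-Real.sin (ω n * t) * ω n * (R t) n +
              Real.cos (ω n * t) * (Real.sin (ω n * t) * F t n)) =
          ω n * (V t) n := by
        rw [hVn t n]; ring
      show HasDerivWithinAt (fun t => Real.sin (ω n * t) * (P t) n -
        Real.cos (ω n * t) * (R t) n) (ω n * (V t) n) (Ici 0) t
      exact hval ▸ h3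
    · rw [hU0, hP0, hR0]
      simp [lp.coeFn_zero]
  -- the wave equation for the constructed solution, componentwise
  have hVnd : ∀ n, ∀ t ∈ Ici (0:ℝ), HasDerivWithinAt (fun s => (V s) n)
      (-(lam n * (U t) n) + F t n) (Ici 0) t := by
    intro n t ht
    have h1 := ((hcosd n t).hasDerivWithinAt (s := Ici 0)).mul (hPnd n t ht)
    have h2 := ((hsind n t).hasDerivWithinAt (s := Ici 0)).mul (hRnd n t ht)
    have h3 := h1.add h2
    have hfun : (fun s => (V s) n) =
        (fun s => Real.cos (ω n * s) * (P s) n + Real.sin (ω n * s) * (R s) n) :=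
      funext fun s => hVn s n
    rw [hfun]
    have hk := hkey n t ht
    have hp := Real.sin_sq_add_cos_sq (ω n * t)
    have hl := hω2 n
    have hval : -Real.sin (ω n * t) * ω n * (P t) n +
          Real.cos (ω n * t) * (Real.cos (ω n * t) * F t n) +
          (Real.cos (ω n * t) * ω n * (R t) n +
            Real.sin (ω n * t) * (Real.sin (ω n * t) * F t n)) =
        -(lam n * (U t) n) + F t n := by
      linear_combination (U t n : ℝ) * hl + ω n * hk + (F t n : ℝ) * hp
    exact hval ▸ h3
  -- inner products of the solution
  have hinnU : ∀ (t : ℝ) (n : ℕ), (inner ℝ (b.repr.symm (U t)) (φ n) : ℝ) = (U t) n :=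
    fun t n => by rw [← hrepr, LinearIsometryEquiv.apply_symm_apply]
  have hinnV : ∀ (t : ℝ) (n : ℕ), (inner ℝ (b.repr.symm (V t)) (φ n) : ℝ) = (V t) n :=
    fun t n => by rw [← hrepr, LinearIsometryEquiv.apply_symm_apply]
  -- the H¹₀-information vector W
  set W : ℝ → E := fun t =>
    diagCLM (fun n => Real.sin (ω n * t)) (fun n => hasb t n) (P t) -
    diagCLM (fun n => Real.cos (ω n * t)) (fun n => hacb t n) (R t) with hWdef
  have hWn : ∀ t ∈ Ici (0:ℝ), ∀ n, (W t) n = ω n * (U t) n := by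
    intro t ht n
    have h1 : (W t) n = Real.sin (ω n * t) * (P t) n - Real.cos (ω n * t) * (R t) n := by
      rw [hWdef]
      simp only [lp.coeFn_sub, Pi.sub_apply, diagCLM_apply]
    rw [h1, ← hkey n t ht]
  have hWsq : ∀ t ∈ Ici (0:ℝ), ∀ n,
      lam n * ((U t) n) ^ 2 = ((W t) n) ^ 2 := by
    intro t ht n
    rw [hWn t ht n, hω2 n]
    ring
  refine ⟨fun t => b.repr.symm (U t), fun t => b.repr.symm (V t), ?_, ?_, ?_, ?_, ?_, ?_, ?_, ?_⟩
  · show b.repr.symm (U 0) = 0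
    rw [hU0, map_zero]
  · show b.repr.symm (V 0) = 0
    rw [hV0, map_zero]
  · intro t ht
    exact (b.repr.symm.toLinearIsometry.toContinuousLinearMap).hasFDerivAt.comp_hasDerivWithinAt
      t (hUd t ht)
  · exact b.repr.symm.continuous.comp_continuousOn hVc
  · intro t ht
    refine (summable_sq (W t)).congr fun n => ?_
    rw [← hWsq t ht n, hinnU t n]
  · intro n t ht
    have hfun : (fun s => (inner ℝ (b.repr.symm (V s)) (φ n) : ℝ)) = fun s => (V s) n :=
      funext fun s => hinnV s n
    rw [hfun, hinnU t n, ← hFn t n]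
    exact hVnd n t ht
  · intro t ht
    have hsum : ∑' n, lam n * (inner ℝ (b.repr.symm (U t)) (φ n) : ℝ) ^ 2
        = ∑' n, ((W t) n) ^ 2 := by
      refine tsum_congr fun n => ?_
      rw [hinnU t n, hWsq t ht n]
    rw [hsum, ← norm_eq_sqrt (W t)]
    -- represent W t as an integral
    have hbb : ∀ (τ : ℝ) (n : ℕ), |Real.sin (ω n * (t - τ))| ≤ 1 := fun τ n =>
      Real.abs_sin_le_one _
    set y : ℝ → E := fun τ =>
      diagCLM (fun n => Real.sin (ω n * (t - τ))) (fun n => hbb τ n) (F τ) with hydef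
    have hyc : ContinuousOn y (Ici 0) :=
      continuousOn_diag (a := fun τ n => Real.sin (ω n * (t - τ))) (fun τ n => hbb τ n)
        (fun n => by fun_prop) hFc
    have hyint : IntervalIntegrable y volume 0 t :=
      (hyc.mono (by rw [uIcc_of_le ht]; exact Icc_subset_Ici_self)).intervalIntegrable
    have hint1 : IntervalIntegrable
        (fun τ => diagCLM (fun n => Real.sin (ω n * t)) (fun n => hasb t n) (Ic τ))
        volume 0 t :=
      (((diagCLM (fun n => Real.sin (ω n * t)) (fun n => hasb t n)).continuous.comp_continuousOn
        hIcc).mono (by rw [uIcc_of_le ht]; exact Icc_subset_Ici_self)).intervalIntegrable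
    have hint2 : IntervalIntegrable
        (fun τ => diagCLM (fun n => Real.cos (ω n * t)) (fun n => hacb t n) (Is τ))
        volume 0 t :=
      (((diagCLM (fun n => Real.cos (ω n * t)) (fun n => hacb t n)).continuous.comp_continuousOn
        hIsc).mono (by rw [uIcc_of_le ht]; exact Icc_subset_Ici_self)).intervalIntegrable
    have hWt : W t = ∫ τ in (0:ℝ)..t, y τ := by
      have e1 : diagCLM (fun n => Real.sin (ω n * t)) (fun n => hasb t n) (P t)
          = ∫ τ in (0:ℝ)..t,
              diagCLM (fun n => Real.sin (ω n * t)) (fun n => hasb t n) (Ic τ) :=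
        ((diagCLM (fun n => Real.sin (ω n * t)) (fun n => hasb t n)).intervalIntegral_comp_comm
          (hIcint t ht)).symm
      have e2 : diagCLM (fun n => Real.cos (ω n * t)) (fun n => hacb t n) (R t)
          = ∫ τ in (0:ℝ)..t,
              diagCLM (fun n => Real.cos (ω n * t)) (fun n => hacb t n) (Is τ) :=
        ((diagCLM (fun n => Real.cos (ω n * t)) (fun n => hacb t n)).intervalIntegral_comp_comm
          (hIsint t ht)).symm
      rw [hWdef]
      show diagCLM (fun n => Real.sin (ω n * t)) (fun n => hasb t n) (P t) -
        diagCLM (fun n => Real.cos (ω n * t)) (fun n => hacb t n) (R t) = _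
      rw [e1, e2, ← intervalIntegral.integral_sub hint1 hint2]
      refine intervalIntegral.integral_congr fun τ _ => ?_
      ext n
      simp only [lp.coeFn_sub, Pi.sub_apply, diagCLM_apply, hydef, hIcdef, hIsdef]
      rw [mul_sub, Real.sin_sub]
      ring
    rw [hWt]
    calc ‖∫ τ in (0:ℝ)..t, y τ‖ ≤ ∫ τ in (0:ℝ)..t, ‖y τ‖ :=
          intervalIntegral.norm_integral_le_integral_norm ht
      _ ≤ ∫ τ in (0:ℝ)..t, ‖f τ‖ := by
          have hfint : IntervalIntegrable (fun τ => ‖f τ‖) volume 0 t :=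
            ((hf.norm).mono
              (by rw [uIcc_of_le ht]; exact Icc_subset_Ici_self)).intervalIntegrable
          refine intervalIntegral.integral_mono_on ht hyint.norm hfint fun τ hτ => ?_
          rw [← hFf τ]
          exact norm_diagCLM_apply_le _ _ (F τ)
  · -- uniqueness
    intro w w' hw0 hw'0 hwd hw'c _hwsum hwave t ht
    have hcomp : ∀ n, (inner ℝ (w t) (φ n) : ℝ) = (U t) n := by
      intro n
      have hwd1 : ∀ s ∈ Ici (0:ℝ), HasDerivWithinAt (fun r => (inner ℝ (w r) (φ n) : ℝ))
          ((inner ℝ (w' s) (φ n) : ℝ)) (Ici 0) s := by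
        intro s hs
        have h := (innerSL ℝ (φ n)).hasFDerivAt.comp_hasDerivWithinAt s (hwd s hs)
        have hfun : (fun r => (innerSL ℝ (φ n)) (w r)) = fun r => (inner ℝ (w r) (φ n) : ℝ) :=
          funext fun r => by rw [innerSL_apply_apply, real_inner_comm]
        have hv : (innerSL ℝ (φ n)) (w' s) = (inner ℝ (w' s) (φ n) : ℝ) := by
          rw [innerSL_apply_apply, real_inner_comm]
        rw [← hfun, ← hv]
        exact h
      set dn : ℝ → ℝ := fun s => (inner ℝ (w s) (φ n) : ℝ) - (U s) n with hdndef
      set dn' : ℝ → ℝ := fun s => (inner ℝ (w' s) (φ n) : ℝ) - (V s) n with hdn'def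
      have hdd : ∀ s ∈ Ici (0:ℝ), HasDerivWithinAt dn (dn' s) (Ici 0) s := fun s hs =>
        (hwd1 s hs).sub (hUnd n s hs)
      have hdd' : ∀ s ∈ Ici (0:ℝ), HasDerivWithinAt dn' (-(lam n * dn s)) (Ici 0) s := by
        intro s hs
        have h1 := hwave n s hs
        have h2 := hVnd n s hs
        have h3 := h1.sub h2
        have hval : -(lam n * (inner ℝ (w s) (φ n) : ℝ)) + (inner ℝ (f s) (φ n) : ℝ) -
            (-(lam n * (U s) n) + F s n) = -(lam n * dn s) := by
          rw [hdndef]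
          have := hFn s n
          linear_combination - this
        exact hval ▸ h3
      set Eng : ℝ → ℝ := fun s => dn' s * dn' s + lam n * (dn s * dn s) with hEngdef
      have hEd : ∀ s ∈ Ici (0:ℝ), HasDerivWithinAt Eng 0 (Ici 0) s := by
        intro s hs
        have h1 := (hdd' s hs).mul (hdd' s hs)
        have h2 := ((hdd s hs).mul (hdd s hs)).const_mul (lam n)
        have h3 := h1.add h2
        have hval : -(lam n * dn s) * dn' s + dn' s * -(lam n * dn s) +
            lam n * (dn' s * dn s + dn s * dn' s) = 0 := by ring
        show HasDerivWithinAt (fun s => dn' s * dn' s + lam n * (dn s * dn s)) 0 (Ici 0) s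
        exact hval ▸ h3
      have hE0 : Eng 0 = 0 := by
        have hU0n : (U 0) n = 0 := by rw [hU0]; exact rfl
        have hV0n : (V 0) n = 0 := by rw [hV0]; exact rfl
        simp only [hEngdef, hdndef, hdn'def, hw0, hw'0, hU0n, hV0n, inner_zero_left]
        norm_num
      have hEt : Eng t = 0 := by
        have := primitive_unique (d := fun _ => (0:ℝ)) hEd
          (fun s _ => hasDerivWithinAt_const s (Ici 0) (0:ℝ)) (by rw [hE0])
        exact this t ht
      have hEt' : dn' t * dn' t + lam n * (dn t * dn t) = 0 := hEt
      have hdnt : dn t = 0 := by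
        have h5 : dn t * dn t ≤ 0 := by
          nlinarith [mul_self_nonneg (dn' t), mul_self_nonneg (dn t), hpos n, hEt']
        exact mul_self_eq_zero.mp (le_antisymm h5 (mul_self_nonneg _))
      have : (inner ℝ (w t) (φ n) : ℝ) - (U t) n = 0 := hdnt
      linarith
    apply b.repr.injective
    ext n
    rw [LinearIsometryEquiv.apply_symm_apply, hrepr (w t) n]
    exact hcomp n
end

section
/- Let Ω be a bounded Lipschitz domain, f : [0,∞) → L²(Ω) continuous, and u the weak solution of ü = Δu + f with vanishing initial data. Then the function w(t) := ∫_0^t u(τ) dτ is continuous from [0,∞) into D(Δ), i.e., w(t) ∈ H¹₀(Ω) with Δw(t) ∈ L²(Ω) for every t, and t ↦ Δw(t) is continuous into L²(Ω). -/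
open Set intervalIntegral

/-- Regularization by time integration (last part of Proposition D.1): if `u` is the weak
solution of `ü = Δu + f` (equation in `H⁻¹(Ω)`, encoded componentwise on the Dirichlet
eigenbasis) with vanishing initial data and `f : [0,∞) → L²(Ω)` continuous, then
`w(t) = ∫_0^t u(τ) dτ` is continuous from `[0,∞)` into `D(Δ)`: `w(t) ∈ H¹₀` with
`Δw(t) ∈ L²` for every `t ≥ 0` (spectrally, `∑ λ_n² (w(t),φ_n)² < ∞`), and
`t ↦ Δw(t) = −∑ λ_n (w(t),φ_n) φ_n` is continuous into `L²(Ω)`. -/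
theorem stmt16 {H : Type*} [NormedAddCommGroup H] [InnerProductSpace ℝ H] [CompleteSpace H]
    (φ : ℕ → H) (hON : Orthonormal ℝ φ)
    (hcomplete : (Submodule.span ℝ (Set.range φ)).topologicalClosure = ⊤)
    (lam : ℕ → ℝ) (hpos : ∀ n, 0 < lam n)
    (f : ℝ → H) (hf : ContinuousOn f (Ici 0))
    (u u' : ℝ → H)
    (h0 : u 0 = 0) (h0' : u' 0 = 0)
    (hu : ∀ t ∈ Ici (0:ℝ), HasDerivWithinAt u (u' t) (Ici 0) t)
    (hu' : ContinuousOn u' (Ici 0))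
    (hV : ∀ t ∈ Ici (0:ℝ), Summable (fun n => lam n * (inner ℝ (u t) (φ n) : ℝ) ^ 2))
    (heq : ∀ n, ∀ t ∈ Ici (0:ℝ), HasDerivWithinAt (fun s => (inner ℝ (u' s) (φ n) : ℝ))
      (-(lam n * (inner ℝ (u t) (φ n) : ℝ)) + (inner ℝ (f t) (φ n) : ℝ)) (Ici 0) t)
    (w : ℝ → H) (hw : ∀ t, w t = ∫ τ in (0:ℝ)..t, u τ) :
    (∀ t ∈ Ici (0:ℝ), Summable (fun n => lam n ^ 2 * (inner ℝ (w t) (φ n) : ℝ) ^ 2)) ∧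
    ContinuousOn (fun t => -∑' n, (lam n * (inner ℝ (w t) (φ n) : ℝ)) • φ n) (Ici 0) := by
  have hu_cont : ContinuousOn u (Ici 0) := fun t ht => (hu t ht).continuousWithinAt
  set F : ℝ → H := fun t => ∫ τ in (0:ℝ)..t, f τ with hFdef
  set g : ℝ → H := fun t => F t - u' t with hgdef
  have hL : ∀ (x : H) (n : ℕ), (inner ℝ x (φ n) : ℝ) = (innerSL ℝ (φ n)) x := by
    intro x n; simp [real_inner_comm]
  have hfi : ∀ t ∈ Ici (0:ℝ), IntervalIntegrable f MeasureTheory.volume 0 t := by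
    intro t ht
    exact (hf.mono (by rw [uIcc_of_le ht]; exact Icc_subset_Ici_self)).intervalIntegrable
  have hui : ∀ t ∈ Ici (0:ℝ), IntervalIntegrable u MeasureTheory.volume 0 t := by
    intro t ht
    exact (hu_cont.mono (by rw [uIcc_of_le ht]; exact Icc_subset_Ici_self)).intervalIntegrable
  -- component continuity
  have hcomp : ∀ (n : ℕ) (v : ℝ → H), ContinuousOn v (Ici 0) →
      ContinuousOn (fun s => (inner ℝ (v s) (φ n) : ℝ)) (Ici 0) := by
    intro n v hv
    exact ((innerSL ℝ (φ n)).continuous.comp_continuousOn hv).congr (fun x _ => hL (v x) n)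
  -- key identity: lam n * ⟨w t, φ n⟩ = ⟨g t, φ n⟩ for t ≥ 0
  have key : ∀ t ∈ Ici (0:ℝ), ∀ n, lam n * (inner ℝ (w t) (φ n) : ℝ) = (inner ℝ (g t) (φ n) : ℝ) := by
    intro t ht n
    have hwn : (inner ℝ (w t) (φ n) : ℝ) = ∫ τ in (0:ℝ)..t, (inner ℝ (u τ) (φ n) : ℝ) := by
      rw [hw t, hL]
      rw [← ((innerSL ℝ (φ n)).intervalIntegral_comp_comm (hui t ht))]
      exact intervalIntegral.integral_congr (fun x _ => (hL (u x) n).symm)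
    have hFn : (inner ℝ (F t) (φ n) : ℝ) = ∫ τ in (0:ℝ)..t, (inner ℝ (f τ) (φ n) : ℝ) := by
      rw [hL, ← ((innerSL ℝ (φ n)).intervalIntegral_comp_comm (hfi t ht))]
      exact intervalIntegral.integral_congr (fun x _ => (hL (f x) n).symm)
    have hint1 : IntervalIntegrable (fun s => -(lam n * (inner ℝ (u s) (φ n) : ℝ)))
        MeasureTheory.volume 0 t := by
      apply ContinuousOn.intervalIntegrable
      rw [uIcc_of_le ht]
      exact ((continuousOn_const.mul ((hcomp n u hu_cont).mono Icc_subset_Ici_self)).neg)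
    have hint2 : IntervalIntegrable (fun s => (inner ℝ (f s) (φ n) : ℝ))
        MeasureTheory.volume 0 t := by
      apply ContinuousOn.intervalIntegrable
      rw [uIcc_of_le ht]
      exact (hcomp n f hf).mono Icc_subset_Ici_self
    have hftc := intervalIntegral.integral_eq_sub_of_hasDerivAt_of_le ht
      ((hcomp n u' hu').mono Icc_subset_Ici_self)
      (fun s hs => ((heq n s (le_of_lt hs.1)).hasDerivAt (Ici_mem_nhds hs.1)))
      (hint1.add hint2)
    rw [h0', inner_zero_left, sub_zero] at hftc
    rw [intervalIntegral.integral_add hint1 hint2, intervalIntegral.integral_neg,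
      intervalIntegral.integral_const_mul] at hftc
    have : (inner ℝ (g t) (φ n) : ℝ) = (inner ℝ (F t) (φ n) : ℝ) - (inner ℝ (u' t) (φ n) : ℝ) := by
      rw [hgdef]; simp [inner_sub_left]
    rw [this, hwn, hFn, ← hftc]
    ring
  -- the limit function
  have hF_cont : ContinuousOn F (Ici 0) := by
    intro t ht
    have ht' : (0:ℝ) ≤ t := ht
    have hle : (0:ℝ) ≤ t + 1 := by linarith
    have hint : IntervalIntegrable f MeasureTheory.volume 0 (t+1) := hfi (t+1) hle
    have h1 : ContinuousOn F (uIcc (0:ℝ) (t+1)) :=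
      intervalIntegral.continuousOn_primitive_interval' hint left_mem_uIcc
    rw [uIcc_of_le hle] at h1
    have hmem : Icc (0:ℝ) (t+1) ∈ nhdsWithin t (Ici 0) := by
      refine Filter.mem_of_superset (inter_mem_nhdsWithin (Ici 0) (Iio_mem_nhds (by linarith : t < t + 1))) ?_
      exact fun x hx => ⟨hx.1, le_of_lt hx.2⟩
    exact (h1 t ⟨ht', by linarith⟩).mono_of_mem_nhdsWithin hmem
  have hg_cont : ContinuousOn g (Ici 0) := hF_cont.sub hu'
  -- Hilbert basis
  let b : HilbertBasis ℕ ℝ H := HilbertBasis.mk hON (le_of_eq hcomplete.symm)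
  have hb : (⇑b : ℕ → H) = φ := HilbertBasis.coe_mk hON _
  constructor
  · intro t ht
    have : Summable (fun n => ‖(inner ℝ (φ n) (g t) : ℝ)‖ ^ 2) :=
      Orthonormal.inner_products_summable (g t) hON
    refine this.congr (fun n => ?_)
    rw [Real.norm_eq_abs, sq_abs, real_inner_comm, ← key t ht n]
    ring
  · refine (hg_cont.neg.congr ?_)
    intro t ht
    have hsum : HasSum (fun n => (lam n * (inner ℝ (w t) (φ n) : ℝ)) • φ n) (g t) := by
      have h2 := b.hasSum_repr (g t)
      have heqf : (fun n => (lam n * (inner ℝ (w t) (φ n) : ℝ)) • φ n)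
          = fun n => b.repr (g t) n • b n := by
        funext n
        rw [b.repr_apply_apply]
        congr 1
        · rw [show b n = φ n from congrFun hb n, key t ht n]
          exact real_inner_comm _ _
        · exact (congrFun hb n).symm
      rw [heqf]
      exact h2
    simp only [hsum.tsum_eq, Pi.neg_apply]
end
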